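/- arXiv:0804.1032 — 6 statements merged into one kernel-verified Lean document; each statement's English description precedes it below -/
import Mathlib

section
/- The Taylor expansion of $g_p(z)=\exp\left(t\frac{z-1}{1-pz}\right)$ at $z_0=1$ is $g_p(z)=\sum_{k=0}^\infty (z-1)^k Q_k(t,p)$ where $Q_0=1$ and $Q_k(t,p)=\frac{1}{(1-p)^k}\sum_{j=1}^k p^{k-j}\frac{t^j}{j!}\binom{k-1}{j-1}$ for $k\ge1$, valid for $|z-1|<\frac{1-p}{p}$ (all $z$ if $p=0$). -/
/-- The factorial moments of the Pólya-Aeppli distribution. -/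
noncomputable def polyaAeppliQ (t p : ℝ) (k : ℕ) : ℝ :=
  if k = 0 then 1 else
    (1 / (1 - p) ^ k) *
      ∑ j ∈ Finset.Icc 1 k, p ^ (k - j) * t ^ j / (Nat.factorial j) * (Nat.choose (k - 1) (j - 1))

theorem polyaAeppli_factorial_moment_expansion (t p : ℝ) (ht : 0 < t) (hp0 : 0 ≤ p) (hp1 : p < 1)
    (z : ℂ) (hz : p = 0 ∨ ‖z - 1‖ < (1 - p) / p) :
    Complex.exp ((t : ℂ) * (z - 1) / (1 - (p : ℂ) * z)) =
      ∑' k : ℕ, (z - 1) ^ k * (polyaAeppliQ t p k : ℂ) := by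
  have h1p : (0:ℝ) < 1 - p := by linarith
  set w : ℂ := z - 1 with hw
  set A : ℂ := (p:ℂ) / (1 - p) with hA
  set C : ℂ := (t:ℂ) / (1 - p) with hC
  set r : ℂ := A * w with hrdef
  have h1pC : (1:ℂ) - (p:ℂ) ≠ 0 := by
    rw [show (1:ℂ) - p = ((1 - p : ℝ) : ℂ) by push_cast; ring]
    exact_mod_cast h1p.ne'
  have hr : ‖r‖ < 1 := by
    rcases hz with h0 | h0
    · simp [hrdef, hA, h0]
    · have hp : 0 < p := by
        rcases lt_or_eq_of_le hp0 with h | h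
        · exact h
        · exfalso; rw [← h] at h0; simp at h0
          exact (not_lt.2 (norm_nonneg w)) h0
      have hAnorm : ‖A‖ = p / (1 - p) := by
        rw [hA, norm_div]
        rw [show (1:ℂ) - p = ((1 - p : ℝ) : ℂ) by push_cast; ring]
        rw [Complex.norm_real, Complex.norm_real]
        rw [Real.norm_eq_abs, Real.norm_eq_abs, abs_of_nonneg hp0, abs_of_nonneg h1p.le]
      have : ‖r‖ = p / (1 - p) * ‖w‖ := by rw [hrdef, norm_mul, hAnorm]
      rw [this]
      calc p / (1 - p) * ‖w‖ < p / (1 - p) * ((1 - p) / p) :=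
            mul_lt_mul_of_pos_left h0 (div_pos hp h1p)
        _ = 1 := by field_simp
  have h1r : (1:ℂ) - r ≠ 0 := by
    intro h
    rw [sub_eq_zero] at h
    rw [← h] at hr
    simp at hr
  have hden : 1 - (p:ℂ) * z = (1 - (p:ℂ)) * (1 - r) := by
    rw [hrdef, hA, hw]; field_simp; try ring
  set E : ℂ := C * w / (1 - r) with hE
  have hEeq : (t:ℂ) * (z - 1) / (1 - (p:ℂ) * z) = E := by
    rw [hden, hE, hC, ← hw]; field_simp
  rw [hEeq]
  clear_value E r C A w
  clear hden hEeq hz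
  set g : ℕ × ℕ → ℂ := fun q =>
    if q.1 = 0 then (if q.2 = 0 then 1 else 0)
    else C ^ q.1 / (Nat.factorial q.1) * ((q.2 + (q.1 - 1)).choose (q.1 - 1)) * r ^ q.2 * w ^ q.1
    with hgdef
  -- complex row sums
  have hrowC : ∀ j : ℕ, HasSum (fun m => g (j, m)) (E ^ j / (Nat.factorial j)) := by
    intro j
    have hfact : ((Nat.factorial (j)) : ℂ) ≠ 0 := Nat.cast_ne_zero.2 (Nat.factorial_ne_zero _)
    rcases j with _ | i
    · have hfun : (fun m => g (0, m)) = fun m => if m = 0 then (1:ℂ) else 0 := by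
        funext m; simp [hgdef]
      rw [hfun]
      simpa using hasSum_ite_eq (0:ℕ) (1:ℂ)
    · have h := (hasSum_choose_mul_geometric_of_norm_lt_one i hr).mul_left
        (C ^ (i+1) / (Nat.factorial (i+1)) : ℂ)
      have h2 := h.mul_right (w ^ (i+1))
      have hfun : (fun m => g (i+1, m))
          = fun m => C ^ (i+1) / (Nat.factorial (i+1) : ℂ) * (((m+i).choose i : ℂ) * r ^ m)
              * w ^ (i+1) := by
        funext m
        simp only [hgdef, Nat.succ_ne_zero, if_false, Nat.add_sub_cancel]
        ring
      have hval : E ^ (i+1) / ((Nat.factorial (i+1)) : ℂ)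
          = C ^ (i+1) / (Nat.factorial (i+1) : ℂ) * (1 / (1 - r) ^ (i+1)) * w ^ (i+1) := by
        rw [hE]
        have hpow : ((1:ℂ) - r) ^ (i+1) ≠ 0 := pow_ne_zero _ h1r
        generalize (1:ℂ) - r = u
        ring
      rw [hfun, hval]
      exact h2
  -- norm rows
  set D : ℝ := ‖C‖ * ‖w‖ / (1 - ‖r‖) with hD
  clear_value D
  have h1rR : (0:ℝ) < 1 - ‖r‖ := by linarith
  have hrowN : ∀ j : ℕ, HasSum (fun m => ‖g (j, m)‖) (D ^ j / (Nat.factorial j)) := by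
    intro j
    have hfact : ((Nat.factorial j : ℝ)) ≠ 0 := Nat.cast_ne_zero.2 (Nat.factorial_ne_zero _)
    rcases j with _ | i
    · have hfun : (fun m => ‖g (0, m)‖) = fun m => if m = 0 then (1:ℝ) else 0 := by
        funext m; by_cases h : m = 0 <;> simp [hgdef, h]
      rw [hfun]
      simpa using hasSum_ite_eq (0:ℕ) (1:ℝ)
    · have hr' : ‖(‖r‖)‖ < 1 := by rwa [norm_norm]
      have h := (hasSum_choose_mul_geometric_of_norm_lt_one i hr').mul_left
        (‖C‖ ^ (i+1) / (Nat.factorial (i+1)) : ℝ)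
      have h2 := h.mul_right (‖w‖ ^ (i+1))
      have hfun : (fun m => ‖g (i+1, m)‖)
          = fun m => ‖C‖ ^ (i+1) / (Nat.factorial (i+1) : ℝ)
              * (((m+i).choose i : ℝ) * ‖r‖ ^ m) * ‖w‖ ^ (i+1) := by
        funext m
        simp only [hgdef, Nat.succ_ne_zero, if_false, Nat.add_sub_cancel]
        rw [norm_mul, norm_mul, norm_mul, norm_div, norm_pow, norm_pow, norm_pow]
        simp only [Complex.norm_natCast]
        ring
      have hval : D ^ (i+1) / (Nat.factorial (i+1) : ℝ)
          = ‖C‖ ^ (i+1) / (Nat.factorial (i+1) : ℝ) * (1 / (1 - ‖r‖) ^ (i+1)) * ‖w‖ ^ (i+1) := by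
        rw [hD]
        have hpow : ((1:ℝ) - ‖r‖) ^ (i+1) ≠ 0 := pow_ne_zero _ h1rR.ne'
        generalize (1:ℝ) - ‖r‖ = u
        ring
      rw [hfun, hval]
      exact h2
  have hgnorm : Summable (fun q : ℕ × ℕ => ‖g q‖) := by
    rw [summable_prod_of_nonneg (fun q => norm_nonneg _)]
    exact ⟨fun j => (hrowN j).summable,
      (Real.summable_pow_div_factorial D).congr (fun j => ((hrowN j).tsum_eq).symm)⟩
  have hg : Summable g := Summable.of_norm hgnorm
  have hgsum : HasSum g (Complex.exp E) := by
    have h1 : HasSum (fun j => E ^ j / (Nat.factorial j : ℂ)) (∑' q, g q) :=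
      hg.hasSum.prod_fiberwise hrowC
    have h2 : HasSum (fun j => E ^ j / (Nat.factorial j : ℂ)) (Complex.exp E) := by
      rw [Complex.exp_eq_exp_ℂ]
      exact NormedSpace.expSeries_div_hasSum_exp E
    exact (h1.unique h2) ▸ hg.hasSum
  have hsig := (Finset.HasAntidiagonal.sigmaAntidiagonalEquivProd.hasSum_iff).2 hgsum
  have hmain : HasSum (fun k : ℕ => ∑ q ∈ Finset.HasAntidiagonal.antidiagonal k, g q) (Complex.exp E) := by
    refine hsig.sigma fun k => ?_
    have h := hasSum_fintype (fun c : (Finset.HasAntidiagonal.antidiagonal k : Finset (ℕ × ℕ)) => g c)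
    simpa [Finset.sum_attach, Finset.HasAntidiagonal.sigmaAntidiagonalEquivProd] using h
  have hQ : ∀ k : ℕ, ∑ q ∈ Finset.HasAntidiagonal.antidiagonal k, g q = w ^ k * (polyaAeppliQ t p k : ℂ) := by
    intro k
    rw [Finset.Nat.sum_antidiagonal_eq_sum_range_succ_mk]
    rcases k with _ | n
    · simp [hgdef, polyaAeppliQ]
    · rw [Finset.sum_range_succ']
      have hzero : g (0, n + 1 - 0) = 0 := by simp [hgdef]
      rw [hzero, add_zero]
      rw [polyaAeppliQ]
      simp only [Nat.succ_ne_zero, if_false]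
      rw [show Finset.Icc 1 (n+1) = Finset.Ico 1 (n+2) from (Finset.Ico_add_one_right_eq_Icc 1 (n+1))]
      rw [Finset.sum_Ico_eq_sum_range]
      simp only [show n + 2 - 1 = n + 1 from rfl]
      push_cast
      rw [Finset.mul_sum, Finset.mul_sum]
      apply Finset.sum_congr rfl
      intro i hi
      rw [Finset.mem_range] at hi
      rw [show 1 + i = i + 1 from by omega]
      have hm : n + 1 - (i + 1) = n - i := by omega
      have hm2 : n + 1 - (1 + i) = n - i := by omega
      have hch : n - i + i = n := by omega
      have h1i : 1 + i - 1 = i := by omega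
      simp only [hgdef, Nat.succ_ne_zero, if_false, Nat.add_sub_cancel, hm, hm2, hch, h1i]
      rw [hrdef, mul_pow]
      have hwp : w ^ (n - i) * w ^ (i + 1) = w ^ (n + 1) := by
        rw [← pow_add]; congr 1; omega
      have hsplit : ((1:ℂ) - (p:ℂ)) ^ (n + 1) = (1 - (p:ℂ)) ^ (i + 1) * (1 - (p:ℂ)) ^ (n - i) := by
        rw [← pow_add]; congr 1; omega
      have hfact : ((Nat.factorial (i + 1) : ℂ)) ≠ 0 := Nat.cast_ne_zero.2 (Nat.factorial_ne_zero _)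
      rw [hC, hA, div_pow, div_pow, ← hwp, hsplit]
      generalize (1 - (p:ℂ)) = u
      ring
  have hmain' : HasSum (fun k : ℕ => w ^ k * (polyaAeppliQ t p k : ℂ)) (Complex.exp E) := by
    rw [← funext hQ]
    exact hmain
  exact hmain'.tsum_eq.symm
end

section
/- For real $x$ and $y,z$ with $|y|+|z|<1$: $\sum_{r=2}^{\infty}\sum_{j=2}^{r}\sum_{s=1}^{j-1}\binom{j-1}{s-1}\frac{x^s}{s!}\binom{r-1}{j-1} y^{j-s} z^{r-j} = \exp\frac{x}{1-y-z} - \exp\frac{x}{1-z}$. -/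
open Finset

noncomputable def gg (x y z : ℝ) (p : ℕ × ℕ × ℕ) : ℝ :=
  ((p.1 + p.2.1 + 1).choose p.1 : ℝ) * x ^ (p.1 + 1) / (Nat.factorial (p.1 + 1)) *
    ((p.1 + p.2.1 + p.2.2 + 1).choose (p.1 + p.2.1 + 1) : ℝ) * y ^ (p.2.1 + 1) * z ^ p.2.2

lemma binom_hasSum {w : ℝ} (hw : |w| < 1) (k : ℕ) :
    HasSum (fun n : ℕ => (((n + k).choose k : ℕ) : ℝ) * w ^ n) (1 / (1 - w) ^ (k + 1)) :=
  hasSum_choose_mul_geometric_of_norm_lt_one k (by rwa [Real.norm_eq_abs])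

lemma inner_n (x y : ℝ) {z : ℝ} (hz : |z| < 1) (s m : ℕ) :
    HasSum (fun n => gg x y z (s, m, n))
      (((s + m + 1).choose s : ℝ) * x ^ (s + 1) / (Nat.factorial (s + 1)) * y ^ (m + 1) *
        (1 / (1 - z) ^ (s + m + 2))) := by
  have H := (binom_hasSum hz (s + m + 1)).mul_left
    (((s + m + 1).choose s : ℝ) * x ^ (s + 1) / (Nat.factorial (s + 1)) * y ^ (m + 1))
  convert H using 1
  · rfl
  funext n
  simp only [gg]
  rw [show n + (s + m + 1) = s + m + n + 1 by ring]
  ring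

lemma inner_m (x : ℝ) {y z : ℝ} (h : |y| + |z| < 1) (s : ℕ) :
    HasSum (fun m => ((s + m + 1).choose s : ℝ) * x ^ (s + 1) / (Nat.factorial (s + 1)) *
        y ^ (m + 1) * (1 / (1 - z) ^ (s + m + 2)))
      (x ^ (s + 1) / (Nat.factorial (s + 1)) *
        (1 / (1 - y - z) ^ (s + 1) - 1 / (1 - z) ^ (s + 1))) := by
  have hz : |z| < 1 := lt_of_le_of_lt (le_add_of_nonneg_left (abs_nonneg y)) h
  have hz1 : (0:ℝ) < 1 - z := by
    have := abs_lt.1 hz; linarith [this.2]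
  have hyz1 : (0:ℝ) < 1 - y - z := by
    have hy := abs_lt.1 (lt_of_le_of_lt (le_add_of_nonneg_right (abs_nonneg z)) h)
    have hz' := abs_lt.1 hz
    nlinarith [le_abs_self y, le_abs_self z, abs_nonneg y, abs_nonneg z, h]
  set t : ℝ := y / (1 - z) with ht_def
  have ht : |t| < 1 := by
    rw [ht_def, abs_div, abs_of_pos hz1, div_lt_one hz1]
    calc |y| < 1 - |z| := by linarith
    _ ≤ 1 - z := by linarith [le_abs_self z]
  have base := binom_hasSum ht s
  have shift : HasSum (fun m : ℕ => (((m + 1 + s).choose s : ℕ) : ℝ) * t ^ (m + 1))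
      (1 / (1 - t) ^ (s + 1) - 1) := by
    have := (hasSum_nat_add_iff' (f := fun n : ℕ => (((n + s).choose s : ℕ) : ℝ) * t ^ n) 1).mpr base
    simpa using this
  have hzt : (1 - z) * (1 - t) = 1 - y - z := by
    rw [ht_def]
    field_simp
    ring
  have H := shift.mul_left (x ^ (s + 1) / (Nat.factorial (s + 1)) / (1 - z) ^ (s + 1))
  convert H using 1
  · rfl
  · funext m
    rw [show s + m + 1 = m + 1 + s by ring, ht_def, div_pow]
    rw [show s + m + 2 = (s + 1) + (m + 1) by ring, pow_add]
    field_simp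
    ring
  · have h1 : 1 / (1 - y - z) ^ (s + 1) = 1 / (1 - z) ^ (s + 1) * (1 / (1 - t) ^ (s + 1)) := by
      rw [← hzt, mul_pow]
      rw [one_div_mul_one_div]
    rw [h1]
    ring

lemma exp_shift (u : ℝ) :
    HasSum (fun n : ℕ => u ^ (n + 1) / (Nat.factorial (n + 1))) (Real.exp u - 1) := by
  have base : HasSum (fun n : ℕ => u ^ n / (Nat.factorial n)) (Real.exp u) := by
    rw [Real.exp_eq_exp_ℝ]
    exact NormedSpace.expSeries_div_hasSum_exp u
  have := (hasSum_nat_add_iff' (f := fun n : ℕ => u ^ n / (Nat.factorial n)) 1).mpr base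
  simpa using this

lemma inner_s {y z : ℝ} (x : ℝ) (h : |y| + |z| < 1) :
    HasSum (fun s : ℕ => x ^ (s + 1) / (Nat.factorial (s + 1)) *
        (1 / (1 - y - z) ^ (s + 1) - 1 / (1 - z) ^ (s + 1)))
      (Real.exp (x / (1 - y - z)) - Real.exp (x / (1 - z))) := by
  have H := (exp_shift (x / (1 - y - z))).sub (exp_shift (x / (1 - z)))
  convert H using 1
  · rfl
  · funext s
    rw [div_pow, div_pow]
    ring
  · ring

lemma summable_gg_nonneg {x y z : ℝ} (hx : 0 ≤ x) (hy : 0 ≤ y) (hz : 0 ≤ z)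
    (hyz : y + z < 1) : Summable (gg x y z) := by
  have h : |y| + |z| < 1 := by rwa [abs_of_nonneg hy, abs_of_nonneg hz]
  have hz1 : |z| < 1 := lt_of_le_of_lt (le_add_of_nonneg_left (abs_nonneg y)) h
  have hnn : ∀ p : ℕ × ℕ × ℕ, 0 ≤ gg x y z p := by
    intro p
    unfold gg
    positivity
  rw [summable_prod_of_nonneg hnn]
  refine ⟨fun s => ?_, ?_⟩
  · -- fiber over s : fun q : ℕ × ℕ => gg x y z (s, q)
    have hnn2 : 0 ≤ fun q : ℕ × ℕ => gg x y z (s, q) := fun q => hnn _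
    rw [summable_prod_of_nonneg hnn2]
    refine ⟨fun m => (inner_n x y hz1 s m).summable, ?_⟩
    refine ((inner_m x h s).summable).congr fun m => ?_
    exact ((inner_n x y hz1 s m).tsum_eq).symm
  · refine ((inner_s x h).summable).congr fun s => ?_
    have hfib : Summable fun q : ℕ × ℕ => gg x y z (s, q) := by
      have hnn2 : 0 ≤ fun q : ℕ × ℕ => gg x y z (s, q) := fun q => hnn _
      rw [summable_prod_of_nonneg hnn2]
      refine ⟨fun m => (inner_n x y hz1 s m).summable, ?_⟩
      refine ((inner_m x h s).summable).congr fun m => ?_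
      exact ((inner_n x y hz1 s m).tsum_eq).symm
    rw [Summable.tsum_prod hfib]
    rw [tsum_congr fun m => (inner_n x y hz1 s m).tsum_eq]
    exact ((inner_m x h s).tsum_eq).symm

lemma gg_abs (x y z : ℝ) (p : ℕ × ℕ × ℕ) : |gg x y z p| = gg |x| |y| |z| p := by
  simp [gg, abs_mul, abs_div, abs_pow, Nat.abs_cast]

lemma summable_gg {x y z : ℝ} (h : |y| + |z| < 1) : Summable (gg x y z) := by
  rw [← summable_abs_iff]
  exact (summable_gg_nonneg (abs_nonneg x) (abs_nonneg y) (abs_nonneg z) h).congr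
    fun p => (gg_abs x y z p).symm

lemma hasSum_gg {x y z : ℝ} (h : |y| + |z| < 1) :
    HasSum (gg x y z) (Real.exp (x / (1 - y - z)) - Real.exp (x / (1 - z))) := by
  have hz1 : |z| < 1 := lt_of_le_of_lt (le_add_of_nonneg_left (abs_nonneg y)) h
  have hs := summable_gg (x := x) h
  have key : ∑' p, gg x y z p
      = Real.exp (x / (1 - y - z)) - Real.exp (x / (1 - z)) := by
    rw [Summable.tsum_prod hs]
    rw [tsum_congr fun s => Summable.tsum_prod (hs.prod_factor s)]
    rw [tsum_congr fun s => tsum_congr fun m => (inner_n x y hz1 s m).tsum_eq]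
    rw [tsum_congr fun s => (inner_m x h s).tsum_eq]
    exact (inner_s x h).tsum_eq
  rw [← key]
  exact hs.hasSum

noncomputable def FF (x y z : ℝ) (p : ℕ × ℕ × ℕ) : ℝ :=
  if 2 ≤ p.2.1 ∧ p.2.1 ≤ p.1 ∧ 1 ≤ p.2.2 ∧ p.2.2 < p.2.1 then
    ((p.2.1 - 1).choose (p.2.2 - 1) : ℝ) * x ^ p.2.2 / (Nat.factorial p.2.2) *
      ((p.1 - 1).choose (p.2.1 - 1) : ℝ) * y ^ (p.2.1 - p.2.2) * z ^ (p.1 - p.2.1)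
  else 0

def ee (p : ℕ × ℕ × ℕ) : ℕ × ℕ × ℕ :=
  (p.1 + p.2.1 + p.2.2 + 2, p.1 + p.2.1 + 2, p.1 + 1)

lemma ee_inj : Function.Injective ee := by
  rintro ⟨a, b, c⟩ ⟨d, e, f⟩ h
  simp only [ee, Prod.ext_iff] at h ⊢
  omega

lemma FF_comp_ee (x y z : ℝ) (p : ℕ × ℕ × ℕ) : FF x y z (ee p) = gg x y z p := by
  obtain ⟨s, m, n⟩ := p
  unfold FF ee gg
  dsimp only
  rw [if_pos (by constructor <;> [omega; constructor <;> [omega; constructor <;> omega]])]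
  have e1 : s + m + 2 - 1 = s + m + 1 := by omega
  have e2 : s + 1 - 1 = s := by omega
  have e3 : s + m + n + 2 - 1 = s + m + n + 1 := by omega
  have e4 : s + m + 2 - (s + 1) = m + 1 := by omega
  have e5 : s + m + n + 2 - (s + m + 2) = n := by omega
  rw [e1, e2, e3, e4, e5]

lemma FF_vanish (x y z : ℝ) : ∀ p ∉ Set.range ee, FF x y z p = 0 := by
  rintro ⟨r, j, s⟩ hp
  by_contra hne
  rw [FF] at hne
  split_ifs at hne with hc
  · dsimp only at hc
    exact hp ⟨(s - 1, j - s - 1, r - j), by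
      simp only [ee, Prod.ext_iff]
      refine ⟨by omega, by omega, by omega⟩⟩
  · exact hne rfl

lemma A_eq (x y z : ℝ) (r : ℕ) :
    (∑ j ∈ Finset.Icc 2 r, ∑ s ∈ Finset.Icc 1 (j - 1),
        (Nat.choose (j - 1) (s - 1) : ℝ) * x ^ s / (Nat.factorial s) *
          (Nat.choose (r - 1) (j - 1) : ℝ) * y ^ (j - s) * z ^ (r - j))
      = ∑' q : ℕ × ℕ, FF x y z (r, q) := by
  rw [tsum_eq_sum (s := Finset.Icc 2 r ×ˢ Finset.Icc 1 r) (by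
    rintro ⟨j, s⟩ hq
    rw [FF]
    split_ifs with hc
    · exfalso
      dsimp only at hc
      refine hq (Finset.mem_product.2 ⟨Finset.mem_Icc.2 ⟨hc.1, hc.2.1⟩,
        Finset.mem_Icc.2 ⟨hc.2.2.1, by omega⟩⟩)
    · rfl)]
  rw [Finset.sum_product]
  refine Finset.sum_congr rfl fun j hj => ?_
  rw [Finset.mem_Icc] at hj
  calc ∑ s ∈ Finset.Icc 1 (j - 1),
        (Nat.choose (j - 1) (s - 1) : ℝ) * x ^ s / (Nat.factorial s) *
          (Nat.choose (r - 1) (j - 1) : ℝ) * y ^ (j - s) * z ^ (r - j)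
      = ∑ s ∈ Finset.Icc 1 (j - 1), FF x y z (r, j, s) := by
        refine Finset.sum_congr rfl fun s hs => ?_
        rw [Finset.mem_Icc] at hs
        rw [FF, if_pos (by dsimp only; omega)]
    _ = ∑ s ∈ Finset.Icc 1 r, FF x y z (r, j, s) := by
        refine Finset.sum_subset (Finset.Icc_subset_Icc le_rfl (by omega)) fun s hs hns => ?_
        rw [Finset.mem_Icc] at hs
        rw [Finset.mem_Icc] at hns
        rw [FF, if_neg (by dsimp only; omega)]

theorem triple_sum_generating_identity (x y z : ℝ) (h : |y| + |z| < 1) :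
    ∑' r : ℕ,
        ∑ j ∈ Finset.Icc 2 r, ∑ s ∈ Finset.Icc 1 (j - 1),
          (Nat.choose (j - 1) (s - 1) : ℝ) * x ^ s / (Nat.factorial s) *
            (Nat.choose (r - 1) (j - 1) : ℝ) * y ^ (j - s) * z ^ (r - j) =
      Real.exp (x / (1 - y - z)) - Real.exp (x / (1 - z)) := by
  have hcomp : FF x y z ∘ ee = gg x y z := funext (FF_comp_ee x y z)
  have hFF : HasSum (FF x y z) (Real.exp (x / (1 - y - z)) - Real.exp (x / (1 - z))) := by
    refine (ee_inj.hasSum_iff (FF_vanish x y z)).mp ?_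
    rw [hcomp]
    exact hasSum_gg h
  calc ∑' r : ℕ, ∑ j ∈ Finset.Icc 2 r, ∑ s ∈ Finset.Icc 1 (j - 1),
          (Nat.choose (j - 1) (s - 1) : ℝ) * x ^ s / (Nat.factorial s) *
            (Nat.choose (r - 1) (j - 1) : ℝ) * y ^ (j - s) * z ^ (r - j)
      = ∑' r : ℕ, ∑' q : ℕ × ℕ, FF x y z (r, q) := tsum_congr (A_eq x y z)
    _ = ∑' p : ℕ × ℕ × ℕ, FF x y z p := (Summable.tsum_prod hFF.summable).symm
    _ = Real.exp (x / (1 - y - z)) - Real.exp (x / (1 - z)) := hFF.tsum_eq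
end

section
/- Let $(a_n)_{n\ge1}$ be a sequence of nonnegative reals and let $\Delta\ge0$ be an integer and $c\ge0$ a real such that $a_{k+\Delta+\ell}\ge a_k + a_\ell - c$ for all positive integers $k,\ell$. Then the limit $\lim_{n\to\infty} a_n/n$ exists (possibly $+\infty$); in particular $\liminf_{n\to\infty} a_n/n \ge \limsup_{n\to\infty} a_n/n$. -/
open Filter

private lemma asl_aux1 (a : ℕ → ℝ) (Δ : ℕ) (c : ℝ)
    (hsup : ∀ k l : ℕ, 1 ≤ k → 1 ≤ l → a k + a l - c ≤ a (k + Δ + l))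
    (m : ℕ) (hm : 1 ≤ m) :
    ∀ q r : ℕ, 1 ≤ r → (q : ℝ) * (a m - c) + a r ≤ a (q * (m + Δ) + r) := by
  intro q
  induction q with
  | zero => intro r hr; simp
  | succ q ih =>
    intro r hr
    have h1 := ih r hr
    have h2 := hsup m (q * (m + Δ) + r) hm (le_trans hr (Nat.le_add_left _ _))
    have heq : (q + 1) * (m + Δ) + r = m + Δ + (q * (m + Δ) + r) := by ring
    rw [heq]
    push_cast
    linarith

private lemma asl_aux2 (a : ℕ → ℝ) (ha : ∀ n, 0 ≤ a n) (Δ : ℕ) (c : ℝ)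
    (hsup : ∀ k l : ℕ, 1 ≤ k → 1 ≤ l → a k + a l - c ≤ a (k + Δ + l))
    (m : ℕ) (hm : 1 ≤ m) (hK : 0 ≤ a m - c) (n : ℕ) (hn : 1 ≤ n) :
    (a m - c) / (m + Δ) - (a m - c) / n ≤ a n / n := by
  set P := m + Δ with hP
  have hP1 : 0 < P := lt_of_lt_of_le hm (Nat.le_add_right _ _)
  set q := (n - 1) / P with hq
  have hqP : q * P ≤ n - 1 := Nat.div_mul_le_self _ _
  have hle : n - 1 < P * q + P := by
    conv_lhs => rw [← Nat.div_add_mod (n - 1) P]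
    exact Nat.add_lt_add_left (Nat.mod_lt _ hP1) _
  rw [mul_comm P q] at hle
  obtain ⟨k, hk⟩ : ∃ k, q * P = k := ⟨_, rfl⟩
  rw [hk] at hqP hle
  set r := n - k with hr
  have hr1 : 1 ≤ r := by omega
  have hrP : r ≤ P := by omega
  have hnqr : n = q * P + r := by omega
  have h1 : (q : ℝ) * (a m - c) + a r ≤ a n := by
    rw [hnqr]; exact asl_aux1 a Δ c hsup m hm q r hr1
  have h2 : (q : ℝ) * (a m - c) ≤ a n := le_trans (by linarith [ha r]) h1
  have hPr : (0 : ℝ) < P := by positivity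
  have hnr : (0 : ℝ) < n := by positivity
  have h3 : (n : ℝ) - P ≤ (q : ℝ) * P := by
    have h4 : n ≤ q * P + P := by omega
    have h5 := (Nat.cast_le (α := ℝ)).2 h4
    push_cast at h5
    linarith
  have key : (a m - c) / (P : ℝ) - (a m - c) / n ≤ (q : ℝ) * (a m - c) / n := by
    rw [div_sub_div _ _ hPr.ne' hnr.ne', div_le_div_iff₀ (by positivity) hnr]
    nlinarith [mul_nonneg (mul_nonneg (sub_nonneg.2 h3) hK) hnr.le]
  have hcast : ((P : ℕ) : ℝ) = (m : ℝ) + (Δ : ℝ) := by rw [hP]; push_cast; ring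
  rw [← hcast]
  refine le_trans key ?_
  gcongr

theorem almost_superadditive_limit (a : ℕ → ℝ) (ha : ∀ n, 0 ≤ a n) (Δ : ℕ) (c : ℝ) (hc : 0 ≤ c)
    (hsup : ∀ k l : ℕ, 1 ≤ k → 1 ≤ l → a k + a l - c ≤ a (k + Δ + l)) :
    (∃ L : EReal, Tendsto (fun n : ℕ => ((a n / n : ℝ) : EReal)) atTop (nhds L)) ∧
      Filter.limsup (fun n : ℕ => ((a n / n : ℝ) : EReal)) atTop ≤
        Filter.liminf (fun n : ℕ => ((a n / n : ℝ) : EReal)) atTop := by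
  set f : ℕ → ℝ := fun n => a n / n with hf
  have hf0 : ∀ n, 0 ≤ f n := fun n => div_nonneg (ha n) (Nat.cast_nonneg n)
  set d : ℕ → ℝ := fun m => (a m - c) / (m + Δ) with hd
  -- eventual lower bound
  have lower : ∀ m : ℕ, 1 ≤ m → ∀ ε : ℝ, 0 < ε → ∀ᶠ n in atTop, d m - ε ≤ f n := by
    intro m hm ε hε
    by_cases hK : 0 ≤ a m - c
    · have h1 : ∀ᶠ n : ℕ in atTop, (a m - c) / n ≤ ε :=
        (tendsto_const_div_atTop_nhds_zero_nat (a m - c)).eventually_le_const hε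
      filter_upwards [h1, eventually_ge_atTop 1] with n hn1 hn2
      have := asl_aux2 a ha Δ c hsup m hm hK n hn2
      simp only [hf, hd]
      linarith
    · filter_upwards with n
      have hmΔ : (0:ℝ) < (m : ℝ) + Δ := by positivity
      have : d m < 0 := div_neg_of_neg_of_pos (by linarith) hmΔ
      linarith [hf0 n]
  have hconc : ∃ L : EReal, Tendsto (fun n : ℕ => ((f n : ℝ) : EReal)) atTop (nhds L) := by
    by_cases hbdd : BddAbove (d '' {m | 1 ≤ m})
    · -- finite limit
      set S := sSup (d '' {m | 1 ≤ m}) with hS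
      set L := max S 0 with hL
      have hne : (d '' {m | 1 ≤ m}).Nonempty := ⟨d 1, 1, by simp, rfl⟩
      have hLc : 0 ≤ L := le_max_right _ _
      have hub : ∀ n : ℕ, 1 ≤ n → f n ≤ L + (L * Δ + c) / n := by
        intro n hn
        have hdn : d n ≤ L := le_trans (le_csSup hbdd ⟨n, hn, rfl⟩) (le_max_left _ _)
        have hPr : (0 : ℝ) < (n : ℝ) + Δ := by positivity
        have hnr : (0 : ℝ) < (n : ℝ) := by positivity
        simp only [hd] at hdn
        have h6 := (div_le_iff₀ hPr).1 hdn
        rw [mul_add] at h6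
        have h5 : a n ≤ L * n + (L * Δ + c) := by linarith
        have heq : (L + (L * Δ + c) / n) * n = L * n + (L * Δ + c) := by field_simp
        simp only [hf]
        rw [div_le_iff₀ hnr, heq]
        exact h5
      have htend : Tendsto f atTop (nhds L) := by
        rw [tendsto_order]
        constructor
        · intro b hb
          rcases lt_or_ge b 0 with hb0 | hb0
          · filter_upwards with n using lt_of_lt_of_le hb0 (hf0 n)
          · have hbS : b < S := by
              rcases le_or_gt S 0 with hS0 | hS0
              · exact absurd hb0 (not_le.2 (by simpa [hL, max_eq_right hS0] using hb))
              · simpa [hL, max_eq_left hS0.le] using hb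
            obtain ⟨y, ⟨m, hm, rfl⟩, hy⟩ := exists_lt_of_lt_csSup hne hbS
            filter_upwards [lower m hm ((d m - b) / 2) (by linarith)] with n hn
            linarith
        · intro b hb
          have h7 : Tendsto (fun n : ℕ => L + (L * Δ + c) / n) atTop (nhds (L + 0)) :=
            tendsto_const_nhds.add (tendsto_const_div_atTop_nhds_zero_nat _)
          rw [add_zero] at h7
          filter_upwards [h7.eventually_lt_const hb, eventually_ge_atTop 1] with n h1 h2
          exact lt_of_le_of_lt (hub n h2) h1
      exact ⟨(L : EReal), EReal.tendsto_coe.2 htend⟩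
    · -- infinite limit
      refine ⟨⊤, EReal.tendsto_nhds_top_iff_real.2 fun M => ?_⟩
      rw [not_bddAbove_iff] at hbdd
      obtain ⟨y, ⟨m, hm, rfl⟩, hy⟩ := hbdd (M + 1)
      filter_upwards [lower m hm 1 one_pos] with n hn
      exact_mod_cast lt_of_lt_of_le (by linarith) hn
  obtain ⟨L, hL⟩ := hconc
  exact ⟨⟨L, hL⟩, le_of_eq (hL.limsup_eq.trans hL.liminf_eq.symm)⟩
end

section
/- Let $(T,\mu)$ be $\phi$-mixing with respect to a finite generating partition $\mathcal{A}$ and suppose all cylinders have positive measure. Then there exists $\eta\in(0,1)$ such that $\mu(A)\le\eta^{|A|}$ for all cylinders $A$, where $|A|=n$ when $A$ is an $n$-cylinder. -/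
open Filter MeasureTheory

/-- For a `φ`-mixing system with respect to a finite generating partition (encoded by the
symbolic coding `c`), all of whose cylinders have positive measure and none of which has full
measure, the measures of `n`-cylinders decay exponentially: there is `η ∈ (0,1)` with
`μ(A) ≤ η^n` for every `n`-cylinder `A`. -/
theorem phi_mixing_cylinder_exponential_decay
    {Ω α : Type*} [MeasurableSpace Ω] [MeasurableSpace α] [MeasurableSingletonClass α]
    [Finite α]
    (μ : Measure Ω) [IsProbabilityMeasure μ] (T : Ω → Ω)
    (hT : MeasurePreserving T μ μ)
    (c : Ω → ℕ → α) (hc : Measurable c)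
    (hshift : ∀ y j, c (T y) j = c y (j + 1))
    (hgen : Function.Injective c)
    (φ : ℕ → ℝ) (hφ0 : ∀ k, 0 ≤ φ k) (hφmono : Antitone φ)
    (hφlim : Tendsto φ atTop (nhds 0))
    (hmix : ∀ (n k : ℕ) (S : Set (Fin n → α)) (S' : Set (ℕ → α)),
      MeasurableSet S → MeasurableSet S' →
      |(μ ({y | (fun j : Fin n => c y j) ∈ S} ∩ (T^[k + n]) ⁻¹' (c ⁻¹' S'))).toReal -
          (μ {y | (fun j : Fin n => c y j) ∈ S}).toReal * (μ (c ⁻¹' S')).toReal| ≤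
        φ k * (μ {y | (fun j : Fin n => c y j) ∈ S}).toReal * (μ (c ⁻¹' S')).toReal)
    -- every nonempty cylinder has positive measure
    (hpos : ∀ (n : ℕ) (s : Fin n → α), {y | ∀ j : Fin n, c y j = s j}.Nonempty →
      0 < μ {y | ∀ j : Fin n, c y j = s j})
    -- μ is not concentrated on a single cylinder of each length
    (hnc : ∀ (n : ℕ) (s : Fin n → α), 1 ≤ n → μ {y | ∀ j : Fin n, c y j = s j} < 1) :
    ∃ η : ℝ, 0 < η ∧ η < 1 ∧ ∀ (n : ℕ) (s : Fin n → α),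
      (μ {y | ∀ j : Fin n, c y j = s j}).toReal ≤ η ^ n := by
  classical
  have hΩ : Nonempty Ω := by
    by_contra h
    rw [not_nonempty_iff] at h
    have h1 : μ Set.univ = 1 := measure_univ
    rw [Set.univ_eq_empty_iff.mpr h] at h1
    simp at h1
  obtain ⟨ω⟩ := hΩ
  haveI hα : Nonempty α := ⟨c ω 0⟩
  haveI : Fintype α := Fintype.ofFinite α
  -- one-cylinder rewriting
  have hone : ∀ a : α, {y | ∀ j : Fin 1, c y ↑j = (fun _ : Fin 1 => a) j} = {y | c y 0 = a} := by
    intro a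
    ext y
    constructor
    · intro h; exact h 0
    · intro h j; rw [Fin.fin_one_eq_zero j]; exact h
  set β : ℝ := Finset.univ.sup' Finset.univ_nonempty
      (fun a : α => (μ {y | c y 0 = a}).toReal) with hβ
  have hβlt1 : β < 1 := by
    rw [hβ, Finset.sup'_lt_iff]
    intro a _
    have := hnc 1 (fun _ => a) le_rfl
    rw [hone a] at this
    have h2 : (μ {y | c y 0 = a}).toReal < (1 : ENNReal).toReal :=
      (ENNReal.toReal_lt_toReal (measure_ne_top μ _) ENNReal.one_ne_top).mpr this
    simpa using h2
  have hβpos : 0 < β := by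
    have hne : {y | ∀ j : Fin 1, c y ↑j = (fun _ : Fin 1 => c ω 0) j}.Nonempty := by
      refine ⟨ω, ?_⟩
      intro j; rw [Fin.fin_one_eq_zero j]; rfl
    have := hpos 1 (fun _ => c ω 0) hne
    rw [hone (c ω 0)] at this
    have h2 : 0 < (μ {y | c y 0 = c ω 0}).toReal :=
      ENNReal.toReal_pos this.ne' (measure_ne_top μ _)
    refine lt_of_lt_of_le h2 ?_
    rw [hβ]
    exact Finset.le_sup' (fun a : α => (μ {y | c y 0 = a}).toReal) (Finset.mem_univ (c ω 0))
  have hβone : ∀ a : α, (μ {y | c y 0 = a}).toReal ≤ β := by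
    intro a
    rw [hβ]
    exact Finset.le_sup' (fun a : α => (μ {y | c y 0 = a}).toReal) (Finset.mem_univ a)
  -- choose k
  have hδpos : 0 < (1 - β) / β := div_pos (by linarith) hβpos
  obtain ⟨k, hk⟩ := (hφlim.eventually (gt_mem_nhds hδpos)).exists
  set θ : ℝ := (1 + φ k) * β with hθdef
  have hθpos : 0 < θ := mul_pos (by nlinarith [hφ0 k]) hβpos
  have hθ1 : θ < 1 := by
    have h1 : θ < (1 + (1 - β) / β) * β :=
      mul_lt_mul_of_pos_right (by linarith) hβpos
    have h2 : (1 + (1 - β) / β) * β = 1 := by field_simp; ring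
    linarith
  set r : ℕ := k + 1 with hr
  -- shift iteration
  have hiter : ∀ (j : ℕ) (y : Ω) (i : ℕ), c (T^[j] y) i = c y (i + j) := by
    intro j
    induction j with
    | zero => simp
    | succ j ih =>
      intro y i
      rw [Function.iterate_succ_apply, ih (T y) i, hshift, Nat.add_assoc]
  -- main inductive bound
  have key : ∀ (m : ℕ) (a : ℕ → α),
      (μ {y | ∀ i < m, c y (i * r) = a i}).toReal ≤ θ ^ m := by
    intro m
    induction m with
    | zero =>
      intro a
      simp
    | succ m ih =>
      intro a
      set S : Set (Fin 1 → α) := {f | f 0 = a 0} with hS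
      set S' : Set (ℕ → α) := {x | ∀ i < m, x (i * r) = a (i + 1)} with hS'
      have hSm : MeasurableSet S := by
        have hE : S = (fun f : Fin 1 → α => f 0) ⁻¹' {a 0} := rfl
        rw [hE]
        exact (measurable_pi_apply (0 : Fin 1)) (measurableSet_singleton (a 0))
      have hS'm : MeasurableSet S' := by
        have hE : S' = ⋂ i ∈ Finset.range m, (fun x : ℕ → α => x (i * r)) ⁻¹' {a (i + 1)} := by
          ext x; simp [hS']
        rw [hE]
        exact MeasurableSet.biInter (Set.to_countable _)
          (fun i _ => (measurable_pi_apply _) (measurableSet_singleton _))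
      have hset : {y | ∀ i < m + 1, c y (i * r) = a i}
          = {y | (fun j : Fin 1 => c y ↑j) ∈ S} ∩ (T^[k + 1]) ⁻¹' (c ⁻¹' S') := by
        ext y
        constructor
        · intro h
          have h0 : c y 0 = a 0 := by simpa using h 0 (Nat.succ_pos m)
          refine ⟨h0, ?_⟩
          show c (T^[k + 1] y) ∈ S'
          intro i hi
          rw [hiter]
          have h3 : (i + 1) * r = i * r + (k + 1) := by rw [Nat.succ_mul, hr]
          rw [← h3]
          exact h (i + 1) (by omega)
        · rintro ⟨h0, h⟩
          intro i hi
          cases i with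
          | zero => have h0' : c y 0 = a 0 := h0; simpa using h0'
          | succ i' =>
            have h2 : c (T^[k + 1] y) (i' * r) = a (i' + 1) := h i' (by omega)
            rw [hiter] at h2
            have h3 : (i' + 1) * r = i' * r + (k + 1) := by rw [Nat.succ_mul, hr]
            rw [h3]
            exact h2
      have hmixk := hmix 1 k S S' hSm hS'm
      set u : ℝ := (μ {y | (fun j : Fin 1 => c y ↑j) ∈ S}).toReal with hu
      set v : ℝ := (μ (c ⁻¹' S')).toReal with hv
      have hub : u ≤ β := by
        have hUeq : {y | (fun j : Fin 1 => c y ↑j) ∈ S} = {y | c y 0 = a 0} := rfl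
        rw [hu, hUeq]
        exact hβone (a 0)
      have hvb : v ≤ θ ^ m := by
        have hVeq : c ⁻¹' S' = {y | ∀ i < m, c y (i * r) = (fun i => a (i + 1)) i} := rfl
        rw [hv, hVeq]
        exact ih (fun i => a (i + 1))
      have hunn : 0 ≤ u := ENNReal.toReal_nonneg
      have hvnn : 0 ≤ v := ENNReal.toReal_nonneg
      have habs := (abs_le.mp hmixk).2
      rw [hset]
      calc (μ ({y | (fun j : Fin 1 => c y ↑j) ∈ S} ∩ (T^[k + 1]) ⁻¹' (c ⁻¹' S'))).toReal
          ≤ (1 + φ k) * (u * v) := by nlinarith [hφ0 k]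
        _ ≤ (1 + φ k) * (β * θ ^ m) := by
            apply mul_le_mul_of_nonneg_left _ (by nlinarith [hφ0 k])
            exact mul_le_mul hub hvb hvnn hβpos.le
        _ = θ ^ (m + 1) := by rw [pow_succ, hθdef]; ring
  -- conclusion
  have hrpos : (0 : ℝ) < (r : ℝ) := by positivity
  refine ⟨θ ^ ((r : ℝ)⁻¹), Real.rpow_pos_of_pos hθpos _,
    Real.rpow_lt_one hθpos.le hθ1 (by positivity), ?_⟩
  intro n s
  set m : ℕ := (n + r - 1) / r with hm
  have hlt : ∀ i < m, i * r < n := by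
    intro i hi
    rw [hm] at hi
    have h1 : (i + 1) * r ≤ n + r - 1 := by
      rw [← Nat.le_div_iff_mul_le (by omega : 0 < r)]
      exact hi
    rw [Nat.succ_mul] at h1
    omega
  have hnm : n ≤ m * r := by
    rw [Nat.mul_comm]
    have h2 := Nat.div_add_mod (n + r - 1) r
    rw [← hm] at h2
    have h3 : (n + r - 1) % r < r := Nat.mod_lt _ (by omega)
    set w := (n + r - 1) % r with hw
    set p := r * m with hp
    omega
  set a : ℕ → α := fun i => if h : i * r < n then s ⟨i * r, h⟩ else Classical.arbitrary α with ha
  have hsub : {y | ∀ j : Fin n, c y ↑j = s j} ⊆ {y | ∀ i < m, c y (i * r) = a i} := by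
    intro y hy i hi
    have h := hlt i hi
    have := hy ⟨i * r, h⟩
    rw [ha]
    simpa [h] using this
  have hmono : (μ {y | ∀ j : Fin n, c y ↑j = s j}).toReal
      ≤ (μ {y | ∀ i < m, c y (i * r) = a i}).toReal :=
    ENNReal.toReal_mono (measure_ne_top μ _) (measure_mono hsub)
  refine le_trans (le_trans hmono (key m a)) ?_
  rw [← Real.rpow_natCast (θ ^ ((r : ℝ)⁻¹)) n, ← Real.rpow_natCast θ m,
    ← Real.rpow_mul hθpos.le]
  apply Real.rpow_le_rpow_of_exponent_ge hθpos hθ1.le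
  rw [show (r : ℝ)⁻¹ * (n : ℕ) = (n : ℝ) / r by ring, div_le_iff₀ hrpos]
  exact_mod_cast hnm
end

section
/- Let $(T,\mu)$ be $(\phi,f)$-mixing. Then for all $r>1$, sets $W_i\subset\Omega$ that are unions of $n_i$-cylinders ($i=1,\dots,r$), and all vectors $1\le v_1<v_2<\cdots<v_r$ with $v_{i+1}-v_i\ge f(n_i)+n_i$ for $i=1,\dots,r-1$, one has $\left|\frac{\mu\left(\bigcap_{i=1}^r T^{-v_i}W_i\right)}{\prod_{i=1}^r\mu(W_i)}-1\right|\le (1+\phi(d))^r - 1$, where $d=\min_i(v_{i+1}-v_i-n_i)$. -/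
open Filter MeasureTheory

/-- Lemma 4 (product mixing) for `(φ,f)`-mixing systems: if the gaps between the hitting times
`v_i` exceed `f(n_i) + n_i`, then the measure of the intersection `⋂ T^{-v_i} W_i` is close to
the product of the measures, with multiplicative error `(1+φ(d))^r - 1` where
`d = min_i (v_{i+1} - v_i - n_i)`. -/
theorem phi_f_mixing_product
    {Ω α : Type*} [MeasurableSpace Ω] [MeasurableSpace α] [MeasurableSingletonClass α]
    (μ : Measure Ω) [IsProbabilityMeasure μ] (T : Ω → Ω)
    (hT : MeasurePreserving T μ μ)
    -- the symbolic coding with respect to the partition 𝒜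
    (c : Ω → ℕ → α) (hc : Measurable c)
    (hshift : ∀ y j, c (T y) j = c y (j + 1))
    -- the separation function f and the mixing rate φ
    (f : ℕ → ℕ) (hf : Monotone f)
    (φ : ℕ → ℝ) (hφ0 : ∀ k, 0 ≤ φ k) (hφmono : Antitone φ)
    -- the (φ,f)-mixing property: U a union of n-cylinders, V in the σ-algebra of
    -- cylinders, gap k ≥ f(n)
    (hmix : ∀ (n k : ℕ) (S : Set (Fin n → α)) (S' : Set (ℕ → α)),
      MeasurableSet S → MeasurableSet S' → f n ≤ k →
      |(μ ({y | (fun j : Fin n => c y j) ∈ S} ∩ (T^[k + n]) ⁻¹' (c ⁻¹' S'))).toReal -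
          (μ {y | (fun j : Fin n => c y j) ∈ S}).toReal * (μ (c ⁻¹' S')).toReal| ≤
        φ k * (μ {y | (fun j : Fin n => c y j) ∈ S}).toReal * (μ (c ⁻¹' S')).toReal)
    -- the data: r > 1 sets W i, each a union of n i cylinders and of positive measure
    (r : ℕ) (hr : 1 < r) (n : ℕ → ℕ) (W : ℕ → Set Ω)
    (hW : ∀ i < r, ∃ S : Set (Fin (n i) → α),
      MeasurableSet S ∧ W i = {y | (fun j : Fin (n i) => c y j) ∈ S})
    (hWpos : ∀ i < r, 0 < μ (W i))
    -- the hitting vector v with sufficiently large gaps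
    (v : ℕ → ℕ) (hv1 : 1 ≤ v 0) (hvmono : ∀ i, i + 1 < r → v i < v (i + 1))
    (hgap : ∀ i, i + 1 < r → f (n i) + n i ≤ v (i + 1) - v i) :
    |(μ (⋂ i ∈ Finset.range r, (T^[v i]) ⁻¹' W i)).toReal /
        (∏ i ∈ Finset.range r, (μ (W i)).toReal) - 1| ≤
      (1 + φ ((Finset.range (r - 1)).inf' (Finset.nonempty_range_iff.mpr (by omega)) fun i => v (i + 1) - v i - n i)) ^ r - 1 := by
  suffices key : ∀ dd : ℕ, (∀ j, j + 1 < r → dd ≤ v (j + 1) - v j - n j) →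
      |(μ (⋂ i ∈ Finset.range r, (T^[v i]) ⁻¹' W i)).toReal /
          (∏ i ∈ Finset.range r, (μ (W i)).toReal) - 1| ≤ (1 + φ dd) ^ r - 1 by
    exact key _ fun j hj => Finset.inf'_le _ (Finset.mem_range.mpr (by omega))
  intro dd hdd
  -- total cylinder representation
  have hE : ∀ i, ∃ E : Set (ℕ → α), MeasurableSet E ∧ (i < r → W i = c ⁻¹' E) := by
    intro i
    by_cases h : i < r
    · obtain ⟨S, hSm, hSW⟩ := hW i h
      exact ⟨(fun x : ℕ → α => fun j : Fin (n i) => x j) ⁻¹' S,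
        (measurable_pi_lambda _ fun j => measurable_pi_apply _) hSm, fun _ => hSW⟩
    · exact ⟨Set.univ, MeasurableSet.univ, fun h' => absurd h' h⟩
  choose E hEm hEW using hE
  -- coding iterate lemma
  have hcT : ∀ (m : ℕ) (y : Ω) (j : ℕ), c (T^[m] y) j = c y (j + m) := by
    intro m
    induction m with
    | zero => intro y j; rfl
    | succ m ih =>
      intro y j
      rw [Function.iterate_succ_apply, ih (T y) j, hshift]
      congr 1
  have hTm : ∀ (m : ℕ) (A : Set (ℕ → α)),
      (T^[m]) ⁻¹' (c ⁻¹' A) = c ⁻¹' ((fun x : ℕ → α => fun k : ℕ => x (k + m)) ⁻¹' A) := by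
    intro m A
    ext y
    have h : c (T^[m] y) = fun j => c y (j + m) := funext fun j => hcT m y j
    simp [Set.mem_preimage, h]
  have hshiftMeas : ∀ m : ℕ, Measurable (fun x : ℕ → α => fun k : ℕ => x (k + m)) :=
    fun m => measurable_pi_lambda _ fun k => measurable_pi_apply _
  -- monotonicity of v
  have hvle : ∀ i j, i ≤ j → j < r → v i ≤ v j := by
    intro i
    refine Nat.le_induction (fun _ => le_rfl) ?_
    intro j _ ih hjr
    exact (ih (by omega)).trans (hvmono j hjr).le
  -- the tail sets
  set B : ℕ → Set Ω := fun j => ⋂ i ∈ Finset.Ico j r, (T^[v i - v j]) ⁻¹' W i with hB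
  have hBrep : ∀ j, j < r → ∃ S' : Set (ℕ → α), MeasurableSet S' ∧ B j = c ⁻¹' S' := by
    intro j hj
    refine ⟨⋂ i ∈ Finset.Ico j r, (fun x : ℕ → α => fun k : ℕ => x (k + (v i - v j))) ⁻¹' E i,
      ?_, ?_⟩
    · exact MeasurableSet.biInter (Finset.Ico j r).countable_toSet
        fun i _ => (hshiftMeas _) (hEm i)
    · rw [hB, Set.preimage_iInter₂]
      refine Set.iInter₂_congr fun i hi => ?_
      rw [hEW i (Finset.mem_Ico.mp hi).2, hTm]
  -- splitting off the first set
  have hBsplit : ∀ j, j + 1 < r → B j = W j ∩ (T^[v (j + 1) - v j]) ⁻¹' (B (j + 1)) := by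
    intro j hj
    have hjj1 : v j ≤ v (j + 1) := (hvmono j hj).le
    ext y
    simp only [hB, Set.mem_iInter, Set.mem_inter_iff, Set.mem_preimage, Finset.mem_Ico]
    constructor
    · intro h
      refine ⟨?_, fun i hi => ?_⟩
      · have := h j ⟨le_rfl, by omega⟩
        simpa [Nat.sub_self] using this
      · have h2 := h i ⟨by omega, hi.2⟩
        have hvi : v (j + 1) ≤ v i := hvle (j + 1) i hi.1 hi.2
        rw [← Function.iterate_add_apply]
        have heq : v i - v (j + 1) + (v (j + 1) - v j) = v i - v j := by omega
        rw [heq]; exact h2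
    · rintro ⟨h0, h⟩ i hi
      rcases eq_or_lt_of_le hi.1 with rfl | hlt
      · simpa [Nat.sub_self] using h0
      · have h2 := h i ⟨by omega, hi.2⟩
        have hvi : v (j + 1) ≤ v i := hvle (j + 1) i (by omega) hi.2
        rw [← Function.iterate_add_apply] at h2
        have heq : v i - v (j + 1) + (v (j + 1) - v j) = v i - v j := by omega
        rwa [heq] at h2
  -- the mixing step
  have hstep : ∀ j, j + 1 < r →
      |(μ (B j)).toReal - (μ (W j)).toReal * (μ (B (j + 1))).toReal| ≤
        φ dd * (μ (W j)).toReal * (μ (B (j + 1))).toReal := by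
    intro j hj
    obtain ⟨S, hSm, hSW⟩ := hW j (by omega)
    obtain ⟨S', hS'm, hS'eq⟩ := hBrep (j + 1) hj
    have hvj : v j < v (j + 1) := hvmono j hj
    have hgapj := hgap j hj
    set k := v (j + 1) - v j - n j with hk
    have hkn : k + n j = v (j + 1) - v j := by omega
    have hfk : f (n j) ≤ k := by omega
    have hm := hmix (n j) k S S' hSm hS'm hfk
    rw [← hSW, hkn, ← hS'eq, ← hBsplit j hj] at hm
    have hφk : φ k ≤ φ dd := hφmono (hdd j hj)
    refine hm.trans ?_
    have h1 : (0:ℝ) ≤ (μ (W j)).toReal := ENNReal.toReal_nonneg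
    have h2 : (0:ℝ) ≤ (μ (B (j + 1))).toReal := ENNReal.toReal_nonneg
    nlinarith [mul_nonneg h1 h2]
  -- the main induction
  have main : ∀ t, 1 ≤ t → ∀ j, j + t = r →
      |(μ (B j)).toReal - ∏ i ∈ Finset.Ico j r, (μ (W i)).toReal| ≤
        ((1 + φ dd) ^ t - 1) * ∏ i ∈ Finset.Ico j r, (μ (W i)).toReal := by
    intro t
    induction t with
    | zero => omega
    | succ t ih =>
      intro _ j hjt
      rcases Nat.eq_zero_or_pos t with ht0 | ht1
      · subst ht0
        have hj : j + 1 = r := by omega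
        have hIco : Finset.Ico j r = {j} := by
          ext i
          simp only [Finset.mem_Ico, Finset.mem_singleton]
          omega
        have hBj : B j = W j := by
          rw [hB]
          ext y
          simp [hIco, Nat.sub_self]
        rw [hBj, hIco]
        simp only [Finset.prod_singleton, zero_add, pow_one, sub_self, abs_zero]
        have := hφ0 dd
        have : (0:ℝ) ≤ (μ (W j)).toReal := ENNReal.toReal_nonneg
        nlinarith [hφ0 dd]
      · have ihj := ih ht1 (j + 1) (by omega)
        have hst := hstep j (by omega)
        have hprod : ∏ i ∈ Finset.Ico j r, (μ (W i)).toReal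
            = (μ (W j)).toReal * ∏ i ∈ Finset.Ico (j + 1) r, (μ (W i)).toReal :=
          Finset.prod_eq_prod_Ico_succ_bot (by omega) _
        set x := φ dd with hx'
        set w := (μ (W j)).toReal with hw'
        set b := (μ (B (j + 1))).toReal with hb'
        set P := ∏ i ∈ Finset.Ico (j + 1) r, (μ (W i)).toReal with hP'
        set A := (1 + x) ^ t with hA'
        have hw : 0 ≤ w := ENNReal.toReal_nonneg
        have hb : 0 ≤ b := ENNReal.toReal_nonneg
        have hP : 0 ≤ P := Finset.prod_nonneg fun _ _ => ENNReal.toReal_nonneg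
        have hx : 0 ≤ x := hφ0 dd
        have hA : (1:ℝ) ≤ A := one_le_pow₀ (by linarith)
        rw [hprod]
        have hbP : b ≤ A * P := by
          have := (abs_le.mp ihj).2
          linarith
        have habs : |(μ (B j)).toReal - w * (w * P) / w| ≤ 0 ∨ True := Or.inr trivial
        have key1 : |(μ (B j)).toReal - w * P| ≤ |(μ (B j)).toReal - w * b| + w * |b - P| := by
          have heq : (μ (B j)).toReal - w * P = ((μ (B j)).toReal - w * b) + w * (b - P) := by
            ring
          rw [heq]
          refine (abs_add_le _ _).trans ?_
          rw [abs_mul, abs_of_nonneg hw]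
        have key2 : w * |b - P| ≤ w * ((A - 1) * P) :=
          mul_le_mul_of_nonneg_left ihj hw
        have hpow : (1 + x) ^ (t + 1) = A * (1 + x) := by rw [hA', ← pow_succ]
        rw [hpow]
        nlinarith [mul_le_mul_of_nonneg_left hbP (mul_nonneg hx hw), mul_nonneg hw hP,
          mul_nonneg (mul_nonneg hx hw) hb]
  -- assemble
  have hPpos : 0 < ∏ i ∈ Finset.range r, (μ (W i)).toReal :=
    Finset.prod_pos fun i hi =>
      ENNReal.toReal_pos (hWpos i (Finset.mem_range.mp hi)).ne' (measure_ne_top μ _)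
  have hmain := main r (by omega) 0 (by omega)
  have hinter : (⋂ i ∈ Finset.range r, (T^[v i]) ⁻¹' W i) = (T^[v 0]) ⁻¹' (B 0) := by
    rw [hB]
    ext y
    simp only [Set.mem_iInter, Set.mem_preimage, Finset.mem_range, Finset.mem_Ico]
    constructor
    · intro h i hi
      have h2 := h i hi.2
      rw [← Function.iterate_add_apply]
      have heq : v i - v 0 + v 0 = v i := by
        have := hvle 0 i (by omega) hi.2; omega
      rw [heq]; exact h2
    · intro h i hi
      have h2 := h i ⟨Nat.zero_le _, hi⟩
      rw [← Function.iterate_add_apply] at h2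
      have heq : v i - v 0 + v 0 = v i := by
        have := hvle 0 i (by omega) hi; omega
      rwa [heq] at h2
  have hBmeas : μ ((T^[v 0]) ⁻¹' B 0) = μ (B 0) := by
    obtain ⟨S', hS'm, hS'eq⟩ := hBrep 0 (by omega)
    rw [hS'eq]
    exact (hT.iterate (v 0)).measure_preimage (hc hS'm).nullMeasurableSet
  rw [← Finset.range_eq_Ico] at hmain
  rw [hinter, hBmeas]
  have h1 : (μ (B 0)).toReal / (∏ i ∈ Finset.range r, (μ (W i)).toReal) - 1
      = ((μ (B 0)).toReal - ∏ i ∈ Finset.range r, (μ (W i)).toReal)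
        / (∏ i ∈ Finset.range r, (μ (W i)).toReal) := by
    field_simp
  rw [h1, abs_div, abs_of_pos hPpos, div_le_iff₀ hPpos]
  exact hmain
end

section
/- The return-time compound Poisson distribution with weights $e^{-t}\hat{P}_r(t,p)$, where $\hat{P}_r(t,p)=\sum_{j=0}^r p^{r-j}(1-p)^{j+1}\frac{t^j}{j!}\binom{r}{j}$, has mean $\frac{t+p}{1-p}$ and variance $\frac{t+tp+p}{(1-p)^2}$. -/
/-- The return-time analogue of the Pólya-Aeppli weights. -/
noncomputable def polyaAeppliPhat (t p : ℝ) (r : ℕ) : ℝ :=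
  ∑ j ∈ Finset.range (r + 1),
    p ^ (r - j) * (1 - p) ^ (j + 1) * t ^ j / (Nat.factorial j) * (Nat.choose r j)

open Finset

lemma piece_hasSum {p : ℝ} (hp0 : 0 ≤ p) (hp1 : p < 1) (c : ℕ → ℝ) (hc : ∀ j, 0 ≤ c j)
    (m : ℕ) {S : ℝ} (hS : HasSum (fun j => c j / (1 - p) ^ (j + m + 1)) S) :
    HasSum (fun x : ℕ × ℕ => c x.1 * ((x.1 + x.2 + m).choose (x.1 + m) : ℝ) * p ^ x.2) S := by
  have hp : ‖p‖ < 1 := by rw [Real.norm_eq_abs, abs_of_nonneg hp0]; exact hp1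
  set f : ℕ × ℕ → ℝ := fun x => c x.1 * ((x.1 + x.2 + m).choose (x.1 + m) : ℝ) * p ^ x.2 with hf
  have fib : ∀ j : ℕ, HasSum (fun d => f (j, d)) (c j / (1 - p) ^ (j + m + 1)) := by
    intro j
    have h := (hasSum_choose_mul_geometric_of_norm_lt_one (j + m) hp).mul_left (c j)
    rw [mul_one_div] at h
    convert h using 2 with d
    on_goal 1 => rfl
    simp only [hf]
    rw [show j + d + m = d + (j + m) by omega, mul_assoc]
  have hnn : 0 ≤ f := by
    intro x
    apply mul_nonneg (mul_nonneg (hc x.1) (Nat.cast_nonneg _)) (pow_nonneg hp0 _)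
  have hsummable : Summable f := by
    rw [summable_prod_of_nonneg hnn]
    refine ⟨fun j => (fib j).summable, ?_⟩
    have : (fun j => ∑' d, f (j, d)) = fun j => c j / (1 - p) ^ (j + m + 1) := by
      funext j; exact (fib j).tsum_eq
    rw [this]; exact hS.summable
  have h1 : HasSum (fun j => c j / (1 - p) ^ (j + m + 1)) (∑' x, f x) :=
    hsummable.hasSum.prod_fiberwise fib
  have : S = ∑' x, f x := hS.unique h1
  exact this ▸ hsummable.hasSum

lemma hasSum_rows {f : ℕ × ℕ → ℝ} {S : ℝ} (h : HasSum f S) :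
    HasSum (fun r => ∑ j ∈ Finset.range (r + 1), f (j, r - j)) S := by
  have h2 : HasSum (f ∘ Finset.HasAntidiagonal.sigmaAntidiagonalEquivProd) S :=
    (Equiv.hasSum_iff _).2 h
  have h3 : HasSum (fun n => ∑ x ∈ Finset.HasAntidiagonal.antidiagonal n, f x) S := by
    refine h2.sigma fun n => ?_
    exact (Finset.HasAntidiagonal.antidiagonal n).hasSum f
  convert h3 using 2 with r
  rw [Finset.Nat.sum_antidiagonal_eq_sum_range_succ_mk]

lemma hasSum_exp0 (t : ℝ) : HasSum (fun j : ℕ => t ^ j / (j.factorial : ℝ)) (Real.exp t) := by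
  rw [Real.exp_eq_exp_ℝ]
  exact NormedSpace.expSeries_div_hasSum_exp t

lemma hasSum_exp1 (t : ℝ) :
    HasSum (fun j : ℕ => (j : ℝ) * t ^ j / (j.factorial : ℝ)) (t * Real.exp t) := by
  have h : HasSum (fun j : ℕ => ((j + 1 : ℕ) : ℝ) * t ^ (j + 1) / ((j + 1).factorial : ℝ))
      (t * Real.exp t) := by
    convert (hasSum_exp0 t).mul_left t using 2 with j
    on_goal 1 => rfl
    have h1 : ((j + 1).factorial : ℝ) = (j + 1) * (j.factorial : ℝ) := by
      rw [Nat.factorial_succ]; push_cast; ring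
    have h2 : (j.factorial : ℝ) ≠ 0 := Nat.cast_ne_zero.2 j.factorial_ne_zero
    have h3 : ((j : ℝ) + 1) ≠ 0 := by positivity
    rw [h1]; push_cast; field_simp; ring
  have := (hasSum_nat_add_iff (f := fun j : ℕ => (j : ℝ) * t ^ j / (j.factorial : ℝ)) 1).mp h
  simpa using this

lemma hasSum_exp2 (t : ℝ) :
    HasSum (fun j : ℕ => (j : ℝ) * ((j : ℝ) - 1) * t ^ j / (j.factorial : ℝ))
      (t ^ 2 * Real.exp t) := by
  have h : HasSum (fun j : ℕ => ((j + 2 : ℕ) : ℝ) * (((j + 2 : ℕ) : ℝ) - 1) * t ^ (j + 2) /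
      ((j + 2).factorial : ℝ)) (t ^ 2 * Real.exp t) := by
    convert (hasSum_exp0 t).mul_left (t ^ 2) using 2 with j
    on_goal 1 => rfl
    have h1 : ((j + 2).factorial : ℝ) = ((j : ℝ) + 2) * ((j : ℝ) + 1) * (j.factorial : ℝ) := by
      rw [show j + 2 = (j + 1) + 1 by omega, Nat.factorial_succ, Nat.factorial_succ]
      push_cast; ring
    have h2 : (j.factorial : ℝ) ≠ 0 := Nat.cast_ne_zero.2 j.factorial_ne_zero
    have h3 : ((j : ℝ) + 1) ≠ 0 := by positivity
    have h4 : ((j : ℝ) + 2) ≠ 0 := by positivity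
    rw [h1]; push_cast; field_simp; ring
  have := (hasSum_nat_add_iff
    (f := fun j : ℕ => (j : ℝ) * ((j : ℝ) - 1) * t ^ j / (j.factorial : ℝ)) 2).mp h
  simpa [Finset.sum_range_succ] using this

theorem polyaAeppliHat_mean_variance (t p : ℝ) (ht : 0 < t) (hp0 : 0 < p) (hp1 : p < 1) :
    ∑' r : ℕ, (r : ℝ) * (Real.exp (-t) * polyaAeppliPhat t p r) = (t + p) / (1 - p) ∧
    ∑' r : ℕ, (r : ℝ) ^ 2 * (Real.exp (-t) * polyaAeppliPhat t p r) - ((t + p) / (1 - p)) ^ 2 =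
      (t + t * p + p) / (1 - p) ^ 2 := by
  have hq : (0:ℝ) < 1 - p := by linarith
  have hqne : (1:ℝ) - p ≠ 0 := ne_of_gt hq
  set c0 : ℕ → ℝ := fun j => (1 - p) ^ (j + 1) * t ^ j / (j.factorial : ℝ) with hc0
  have hfac : ∀ j : ℕ, (j.factorial : ℝ) ≠ 0 := fun j => Nat.cast_ne_zero.2 j.factorial_ne_zero
  have hc0nn : ∀ j, 0 ≤ c0 j := fun j => by positivity
  have hqpow : ∀ j : ℕ, ((1:ℝ) - p) ^ j ≠ 0 := fun j => pow_ne_zero _ hqne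
  -- piece 0
  have h0in : HasSum (fun j => c0 j / (1 - p) ^ (j + 0 + 1)) (Real.exp t) := by
    convert hasSum_exp0 t using 2 with j
    simp only [hc0, Nat.add_zero]
    field_simp
  have H0 := piece_hasSum (le_of_lt hp0) hp1 c0 hc0nn 0 h0in
  -- piece 1
  have h1in : HasSum (fun j : ℕ => ((j:ℝ) + 1) * c0 j / (1 - p) ^ (j + 1 + 1))
      ((t + 1) * Real.exp t / (1 - p)) := by
    have h := ((hasSum_exp1 t).add (hasSum_exp0 t)).div_const (1 - p)
    convert h using 2 with j
    on_goal 1 => rfl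
    · simp only [hc0]
      field_simp
      ring
    · ring
  have H1 := piece_hasSum (le_of_lt hp0) hp1 (fun j : ℕ => ((j:ℝ) + 1) * c0 j)
    (fun j => by have := hc0nn j; positivity) 1 h1in
  -- piece 2
  have h2exp : HasSum (fun j : ℕ => ((j:ℝ) + 1) * ((j:ℝ) + 2) * t ^ j / (j.factorial : ℝ))
      ((t ^ 2 + 4 * t + 2) * Real.exp t) := by
    have h := ((hasSum_exp2 t).add ((hasSum_exp1 t).mul_left 4)).add
      ((hasSum_exp0 t).mul_left 2)
    have e1 : (fun j : ℕ => (j : ℝ) * ((j : ℝ) - 1) * t ^ j / (j.factorial : ℝ)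
        + 4 * ((j : ℝ) * t ^ j / (j.factorial : ℝ)) + 2 * (t ^ j / (j.factorial : ℝ)))
        = fun j : ℕ => ((j:ℝ) + 1) * ((j:ℝ) + 2) * t ^ j / (j.factorial : ℝ) := by
      funext j
      have : (j.factorial : ℝ) ≠ 0 := Nat.cast_ne_zero.2 j.factorial_ne_zero
      field_simp
      ring
    rw [e1] at h
    convert h using 1
    ring
  have h2in : HasSum (fun j : ℕ => ((j:ℝ) + 1) * ((j:ℝ) + 2) * c0 j / (1 - p) ^ (j + 2 + 1))
      ((t ^ 2 + 4 * t + 2) * Real.exp t / (1 - p) ^ 2) := by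
    have h := h2exp.div_const ((1 - p) ^ 2)
    convert h using 2 with j
    on_goal 1 => rfl
    simp only [hc0]
    field_simp
    ring
  have H2 := piece_hasSum (le_of_lt hp0) hp1 (fun j : ℕ => ((j:ℝ) + 1) * ((j:ℝ) + 2) * c0 j)
    (fun j => by have := hc0nn j; positivity) 2 h2in
  -- mean
  have Hmean : HasSum (fun r : ℕ => (r : ℝ) * polyaAeppliPhat t p r)
      ((t + 1) * Real.exp t / (1 - p) - Real.exp t) := by
    have h := hasSum_rows (H1.sub H0)
    have erow : (fun r : ℕ => ∑ j ∈ Finset.range (r + 1),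
        (((j : ℝ) + 1) * c0 j * (((j, r - j).1 + (j, r - j).2 + 1).choose ((j, r - j).1 + 1) : ℝ)
            * p ^ (j, r - j).2
          - c0 j * (((j, r - j).1 + (j, r - j).2 + 0).choose ((j, r - j).1 + 0) : ℝ)
            * p ^ (j, r - j).2))
        = fun r : ℕ => (r : ℝ) * polyaAeppliPhat t p r := by
      funext r
      rw [polyaAeppliPhat, Finset.mul_sum]
      refine Finset.sum_congr rfl fun j hj => ?_
      have hjr : j ≤ r := by simpa [Nat.lt_succ_iff] using hj
      simp only [Nat.add_zero]
      rw [Nat.add_sub_cancel' hjr]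
      have key : ((r:ℝ) + 1) * (r.choose j : ℝ) = ((r + 1).choose (j + 1) : ℝ) * ((j:ℝ) + 1) := by
        exact_mod_cast congrArg (Nat.cast (R := ℝ)) (Nat.add_one_mul_choose_eq r j)
      simp only [hc0]
      linear_combination (-((1 - p) ^ (j + 1) * t ^ j * p ^ (r - j) / (j.factorial : ℝ))) * key
    rw [← erow]
    exact h
  -- second moment
  have Hsq : HasSum (fun r : ℕ => (r : ℝ) ^ 2 * polyaAeppliPhat t p r)
      ((t ^ 2 + 4 * t + 2) * Real.exp t / (1 - p) ^ 2
        - 3 * ((t + 1) * Real.exp t / (1 - p)) + Real.exp t) := by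
    have h := hasSum_rows ((H2.sub (H1.mul_left 3)).add H0)
    have erow : (fun r : ℕ => ∑ j ∈ Finset.range (r + 1),
        (((j : ℝ) + 1) * ((j : ℝ) + 2) * c0 j
            * (((j, r - j).1 + (j, r - j).2 + 2).choose ((j, r - j).1 + 2) : ℝ) * p ^ (j, r - j).2
          - 3 * (((j : ℝ) + 1) * c0 j
            * (((j, r - j).1 + (j, r - j).2 + 1).choose ((j, r - j).1 + 1) : ℝ) * p ^ (j, r - j).2)
          + c0 j * (((j, r - j).1 + (j, r - j).2 + 0).choose ((j, r - j).1 + 0) : ℝ)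
            * p ^ (j, r - j).2))
        = fun r : ℕ => (r : ℝ) ^ 2 * polyaAeppliPhat t p r := by
      funext r
      rw [polyaAeppliPhat, Finset.mul_sum]
      refine Finset.sum_congr rfl fun j hj => ?_
      have hjr : j ≤ r := by simpa [Nat.lt_succ_iff] using hj
      simp only [Nat.add_zero]
      rw [Nat.add_sub_cancel' hjr]
      have key1 : ((r:ℝ) + 1) * (r.choose j : ℝ)
          = ((r + 1).choose (j + 1) : ℝ) * ((j:ℝ) + 1) := by
        exact_mod_cast congrArg (Nat.cast (R := ℝ)) (Nat.add_one_mul_choose_eq r j)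
      have key2 : ((r:ℝ) + 2) * ((r + 1).choose (j + 1) : ℝ)
          = ((r + 2).choose (j + 2) : ℝ) * ((j:ℝ) + 2) := by
        have h5 := congrArg (Nat.cast (R := ℝ)) (Nat.add_one_mul_choose_eq (r + 1) (j + 1))
        push_cast at h5
        linarith [h5]
      simp only [hc0]
      linear_combination (-((1 - p) ^ (j + 1) * t ^ j * p ^ (r - j) / (j.factorial : ℝ))) *
        ((((j:ℝ) + 1)) * key2 + ((r:ℝ) - 1) * key1)
    rw [← erow]
    exact h
  have hE : Real.exp t ≠ 0 := Real.exp_ne_zero t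
  constructor
  · have h := Hmean.mul_left (Real.exp (-t))
    have heq : (fun r : ℕ => Real.exp (-t) * ((r : ℝ) * polyaAeppliPhat t p r))
        = fun r : ℕ => (r : ℝ) * (Real.exp (-t) * polyaAeppliPhat t p r) := by
      funext r; ring
    rw [heq] at h
    rw [h.tsum_eq, Real.exp_neg]
    field_simp
    ring
  · have h := Hsq.mul_left (Real.exp (-t))
    have heq : (fun r : ℕ => Real.exp (-t) * ((r : ℝ) ^ 2 * polyaAeppliPhat t p r))
        = fun r : ℕ => (r : ℝ) ^ 2 * (Real.exp (-t) * polyaAeppliPhat t p r) := by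
      funext r; ring
    rw [heq] at h
    rw [h.tsum_eq, Real.exp_neg]
    field_simp
    ring
end
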